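/- Let X = {λ ∈ Cⁿ : ‖Re λ‖ ≤ k} be a closed tube and let B = PW₀(X) be the Banach algebra of continuous functions X → C, holomorphic on the interior of X, vanishing at infinity, with the sup norm. Let rest : PW₀(X) → PW₀(X/2) be restriction to the half-size tube X/2 = {‖Re λ‖ ≤ k/2}, and let α₁ : PW₀(X/2) → PW₀(X) be (α₁ f)(λ) = f(λ/2). Then rest and α₁ are mutually inverse up to homotopy: the maps α_t ∘ rest and rest ∘ α_t given by f(λ) ↦ f(λ/(1+t)) for t ∈ [0,1] are continuous (pointwise-norm-continuous in t) paths of Banach algebra homomorphisms connecting the identity (t=0) to α₁∘rest and rest∘α₁ respectively (t=1). -/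

import Mathlib

noncomputable section

def reOf {n : ℕ} (l : Fin n → ℂ) : Fin n → ℝ := fun i => (l i).re

/-- The closed tube `X = {λ ∈ ℂⁿ : ‖Re λ‖ ≤ k}`. -/
def Tube (n : ℕ) (k : ℝ) : Set (Fin n → ℂ) := {l | ‖reOf l‖ ≤ k}

/-- Membership in the Banach algebra `PW₀(X)`: continuous on the tube, holomorphic on
its interior, vanishing at infinity. -/
def MemPW0 (n : ℕ) (k : ℝ) (f : (Fin n → ℂ) → ℂ) : Prop :=
  ContinuousOn f (Tube n k) ∧ DifferentiableOn ℂ f (interior (Tube n k)) ∧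
  ∀ ε > (0 : ℝ), ∃ R : ℝ, ∀ l ∈ Tube n k, R ≤ ‖l‖ → ‖f l‖ ≤ ε

/-- The scaling map `(α_t f)(λ) = f(λ/(1+t))`. -/
def scaleMap (n : ℕ) (t : ℝ) (f : (Fin n → ℂ) → ℂ) : (Fin n → ℂ) → ℂ :=
  fun l => f (((1 + t : ℝ) : ℂ)⁻¹ • l)

/-- Restriction to the half-size tube and the scaling `α₁ f = f(·/2)` are mutually
inverse up to homotopy through the Banach algebra homomorphisms `f ↦ f(·/(1+t))`,
`t ∈ [0,1]`, which are norm-continuous in `t`. -/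
lemma continuous_reOf {n : ℕ} : Continuous (reOf (n := n)) :=
  continuous_pi fun i => Complex.continuous_re.comp (continuous_apply i)

lemma isClosed_tube (n : ℕ) (k : ℝ) : IsClosed (Tube n k) :=
  isClosed_le continuous_reOf.norm continuous_const

lemma reOf_smul {n : ℕ} (c : ℝ) (l : Fin n → ℂ) :
    reOf ((c : ℂ) • l) = c • reOf l := by
  funext i
  simp [reOf, Complex.re_ofReal_mul]

lemma norm_reOf_smul {n : ℕ} (c : ℝ) (hc : 0 ≤ c) (l : Fin n → ℂ) :
    ‖reOf ((c : ℂ) • l)‖ = c * ‖reOf l‖ := by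
  rw [reOf_smul, norm_smul, Real.norm_eq_abs, abs_of_nonneg hc]

lemma norm_smul_real {n : ℕ} (c : ℝ) (hc : 0 ≤ c) (l : Fin n → ℂ) :
    ‖(c : ℂ) • l‖ = c * ‖l‖ := by
  rw [norm_smul, Complex.norm_real, Real.norm_eq_abs, abs_of_nonneg hc]

lemma smul_mem_tube {n : ℕ} {k k' c : ℝ} (hc : 0 ≤ c) (h : c * k ≤ k')
    {l : Fin n → ℂ} (hl : l ∈ Tube n k) : (c : ℂ) • l ∈ Tube n k' := by
  simp only [Tube, Set.mem_setOf_eq] at *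
  rw [norm_reOf_smul c hc]
  exact le_trans (mul_le_mul_of_nonneg_left hl hc) h

lemma interior_tube {n : ℕ} {k : ℝ} (hk : 0 < k) :
    interior (Tube n k) = {l | ‖reOf l‖ < k} := by
  apply Set.Subset.antisymm
  · intro l hl
    have hlT : l ∈ Tube n k := interior_subset hl
    by_contra hlt
    simp only [Set.mem_setOf_eq, not_lt] at hlt
    have hre : k ≤ ‖reOf l‖ := hlt
    have hl0 : l ≠ 0 := by
      intro h
      have hz : reOf (0 : Fin n → ℂ) = 0 := by funext i; simp [reOf]
      rw [h, hz, norm_zero] at hre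
      linarith
    have hln : 0 < ‖l‖ := norm_pos_iff.mpr hl0
    rw [mem_interior_iff_mem_nhds, Metric.mem_nhds_iff] at hl
    obtain ⟨ε, hε, hball⟩ := hl
    set δ := ε / (2 * ‖l‖) with hδdef
    have hδ : 0 < δ := by positivity
    have hmem : ((1 + δ : ℝ) : ℂ) • l ∈ Metric.ball l ε := by
      rw [Metric.mem_ball, dist_eq_norm]
      have heq : ((1 + δ : ℝ) : ℂ) • l - l = ((δ : ℝ) : ℂ) • l := by
        have hc : ((1 + δ : ℝ) : ℂ) = ((δ : ℝ) : ℂ) + 1 := by push_cast; ring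
        rw [hc, add_smul, one_smul, add_sub_cancel_right]
      rw [heq, norm_smul_real δ hδ.le, hδdef, div_mul_eq_mul_div,
        div_lt_iff₀ (by positivity)]
      nlinarith
    have hT := hball hmem
    simp only [Tube, Set.mem_setOf_eq] at hT
    rw [norm_reOf_smul (1 + δ) (by linarith) l] at hT
    nlinarith
  · exact interior_maximal (fun m hm => show ‖reOf m‖ ≤ k from le_of_lt hm)
      (isOpen_lt continuous_reOf.norm continuous_const)

lemma scale_mem {n : ℕ} {ks kt : ℝ} (hks : 0 < ks) (hkt : 0 < kt) {c : ℝ}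
    (hc0 : 0 < c) (hck : c * kt ≤ ks) {f : (Fin n → ℂ) → ℂ}
    (hf : MemPW0 n ks f) : MemPW0 n kt (fun l => f ((c : ℂ) • l)) := by
  obtain ⟨hcont, hdiff, hvan⟩ := hf
  have hmaps : Set.MapsTo (fun l : Fin n → ℂ => (c : ℂ) • l) (Tube n kt) (Tube n ks) :=
    fun l hl => smul_mem_tube hc0.le hck hl
  have hmapsInt : Set.MapsTo (fun l : Fin n → ℂ => (c : ℂ) • l)
      (interior (Tube n kt)) (interior (Tube n ks)) := by
    intro l hl
    rw [interior_tube hks, Set.mem_setOf_eq, norm_reOf_smul c hc0.le]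
    rw [interior_tube hkt, Set.mem_setOf_eq] at hl
    calc c * ‖reOf l‖ < c * kt := mul_lt_mul_of_pos_left hl hc0
    _ ≤ ks := hck
  refine ⟨?_, ?_, ?_⟩
  · exact hcont.comp (continuous_const_smul _).continuousOn hmaps
  · exact hdiff.comp ((differentiable_id.const_smul ((c:ℝ):ℂ)).differentiableOn) hmapsInt
  · intro ε hε
    obtain ⟨R, hR⟩ := hvan ε hε
    refine ⟨R / c, fun l hl hRl => ?_⟩
    apply hR _ (hmaps hl)
    have h1 : ‖(c : ℂ) • l‖ = c * ‖l‖ := norm_smul_real c hc0.le l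
    rw [div_le_iff₀ hc0] at hRl
    calc R ≤ ‖l‖ * c := hRl
    _ = ‖(c : ℂ) • l‖ := by rw [h1]; ring

lemma inv_diff_le (t t₀ : ℝ) (ht : 0 ≤ t) (ht₀ : 0 ≤ t₀) :
    |(1 + t)⁻¹ - (1 + t₀)⁻¹| ≤ |t - t₀| := by
  have h1 : (0 : ℝ) < 1 + t := by linarith
  have h2 : (0 : ℝ) < 1 + t₀ := by linarith
  have : (1 + t)⁻¹ - (1 + t₀)⁻¹ = (t₀ - t) / ((1 + t) * (1 + t₀)) := by
    field_simp
    ring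
  rw [this, abs_div, abs_sub_comm]
  have hd : 1 ≤ |(1 + t) * (1 + t₀)| := by
    rw [abs_of_pos (by positivity)]
    nlinarith
  exact div_le_self (abs_nonneg _) hd

set_option maxHeartbeats 800000 in
theorem pw0_tube_homotopy (n : ℕ) (k : ℝ) (hk : 0 < k) :
    -- restriction maps PW₀(X) to PW₀(X/2)
    (∀ f, MemPW0 n k f → MemPW0 n (k / 2) f) ∧
    -- α₁ maps PW₀(X/2) to PW₀(X)
    (∀ f, MemPW0 n (k / 2) f → MemPW0 n k (scaleMap n 1 f)) ∧
    -- α_t ∘ rest is an endomorphism of PW₀(X) for each t ∈ [0,1]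
    (∀ t ∈ Set.Icc (0 : ℝ) 1, ∀ f, MemPW0 n k f → MemPW0 n k (scaleMap n t f)) ∧
    -- rest ∘ α_t is an endomorphism of PW₀(X/2) for each t ∈ [0,1]
    (∀ t ∈ Set.Icc (0 : ℝ) 1, ∀ f, MemPW0 n (k / 2) f →
      MemPW0 n (k / 2) (scaleMap n t f)) ∧
    -- each α_t is an algebra homomorphism
    (∀ (t : ℝ) (f g : (Fin n → ℂ) → ℂ),
      scaleMap n t (fun l => f l * g l) = fun l => scaleMap n t f l * scaleMap n t g l) ∧
    -- at t = 0 the homotopy is the identity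
    (∀ f : (Fin n → ℂ) → ℂ, scaleMap n 0 f = f) ∧
    -- the homotopy is pointwise norm-continuous in t (in the sup norm over the tube)
    (∀ f, MemPW0 n k f → ∀ ε > (0 : ℝ), ∀ t₀ ∈ Set.Icc (0 : ℝ) 1, ∃ δ > (0 : ℝ),
      ∀ t ∈ Set.Icc (0 : ℝ) 1, |t - t₀| < δ →
        ∀ l ∈ Tube n k, ‖scaleMap n t f l - scaleMap n t₀ f l‖ ≤ ε) := by
  
  have hk2 : (0 : ℝ) < k / 2 := by linarith
  have hsub : Tube n (k / 2) ⊆ Tube n k := fun l hl => le_trans (show ‖reOf l‖ ≤ k / 2 from hl) (by linarith : k / 2 ≤ k)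
  have hscale : ∀ (t : ℝ) (f : (Fin n → ℂ) → ℂ),
      scaleMap n t f = fun l => f ((((1 + t)⁻¹ : ℝ) : ℂ) • l) := by
    intro t f
    funext l
    simp [scaleMap, Complex.ofReal_inv]
  refine ⟨?_, ?_, ?_, ?_, ?_, ?_, ?_⟩
  · -- restriction
    rintro f ⟨hcont, hdiff, hvan⟩
    refine ⟨hcont.mono hsub, hdiff.mono (interior_mono hsub), fun ε hε => ?_⟩
    obtain ⟨R, hR⟩ := hvan ε hε
    exact ⟨R, fun l hl => hR l (hsub hl)⟩
  · -- α₁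
    intro f hf
    rw [hscale]
    exact scale_mem hk2 hk (by norm_num) (by norm_num; linarith) hf
  · -- α_t on PW₀(X)
    rintro t ⟨ht0, ht1⟩ f hf
    rw [hscale]
    have h1t : (0 : ℝ) < 1 + t := by linarith
    have hcpos : (0 : ℝ) < (1 + t)⁻¹ := inv_pos.mpr h1t
    have hcmul : (1 + t)⁻¹ * (1 + t) = 1 := inv_mul_cancel₀ h1t.ne'
    have hc1 : (1 + t)⁻¹ ≤ 1 := by nlinarith
    exact scale_mem hk hk hcpos (by nlinarith) hf
  · -- α_t on PW₀(X/2)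
    rintro t ⟨ht0, ht1⟩ f hf
    rw [hscale]
    have h1t : (0 : ℝ) < 1 + t := by linarith
    have hcpos : (0 : ℝ) < (1 + t)⁻¹ := inv_pos.mpr h1t
    have hcmul : (1 + t)⁻¹ * (1 + t) = 1 := inv_mul_cancel₀ h1t.ne'
    have hc1 : (1 + t)⁻¹ ≤ 1 := by nlinarith
    exact scale_mem hk2 hk2 hcpos (by nlinarith) hf
  · -- homomorphism
    intro t f g
    rfl
  · -- t = 0
    intro f
    funext l
    simp [scaleMap]
  · -- norm continuity
    intro f hf ε hε t₀ ht₀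
    obtain ⟨hcont, -, hvan⟩ := hf
    obtain ⟨R, hR⟩ := hvan (ε / 2) (by linarith)
    have hR₁pos : (0 : ℝ) < max R 1 := lt_of_lt_of_le one_pos (le_max_right _ _)
    have hK : IsCompact (Tube n k ∩ Metric.closedBall 0 (2 * max R 1)) :=
      (isCompact_closedBall (0 : Fin n → ℂ) (2 * max R 1)).inter_left (isClosed_tube n k)
    have hUC : UniformContinuousOn f (Tube n k ∩ Metric.closedBall 0 (2 * max R 1)) :=
      hK.uniformContinuousOn_of_continuous (hcont.mono Set.inter_subset_left)
    rw [Metric.uniformContinuousOn_iff] at hUC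
    obtain ⟨δ₁, hδ₁, hδQ⟩ := hUC ε hε
    refine ⟨δ₁ / (2 * max R 1), by positivity, ?_⟩
    rintro t ⟨ht0, ht1⟩ hlt l hl
    obtain ⟨ht₀0, ht₀1⟩ := ht₀
    have h1t : (0 : ℝ) < 1 + t := by linarith
    have h1t₀ : (0 : ℝ) < 1 + t₀ := by linarith
    have hcpos : (0 : ℝ) < (1 + t)⁻¹ := inv_pos.mpr h1t
    have hc₀pos : (0 : ℝ) < (1 + t₀)⁻¹ := inv_pos.mpr h1t₀
    have hcmul : (1 + t)⁻¹ * (1 + t) = 1 := inv_mul_cancel₀ h1t.ne'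
    have hc₀mul : (1 + t₀)⁻¹ * (1 + t₀) = 1 := inv_mul_cancel₀ h1t₀.ne'
    have hc1 : (1 + t)⁻¹ ≤ 1 := by nlinarith
    have hc₀1 : (1 + t₀)⁻¹ ≤ 1 := by nlinarith
    have hchalf : (1 : ℝ) / 2 ≤ (1 + t)⁻¹ := by nlinarith
    have hc₀half : (1 : ℝ) / 2 ≤ (1 + t₀)⁻¹ := by nlinarith
    have hx : scaleMap n t f l = f ((((1 + t)⁻¹ : ℝ) : ℂ) • l) := by rw [hscale]
    have hy : scaleMap n t₀ f l = f ((((1 + t₀)⁻¹ : ℝ) : ℂ) • l) := by rw [hscale]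
    have hxT : (((1 + t)⁻¹ : ℝ) : ℂ) • l ∈ Tube n k :=
      smul_mem_tube hcpos.le (by nlinarith) hl
    have hyT : (((1 + t₀)⁻¹ : ℝ) : ℂ) • l ∈ Tube n k :=
      smul_mem_tube hc₀pos.le (by nlinarith) hl
    by_cases hcase : ‖l‖ ≤ 2 * max R 1
    · -- near: uniform continuity
      have hxK : (((1 + t)⁻¹ : ℝ) : ℂ) • l ∈ Tube n k ∩ Metric.closedBall 0 (2 * max R 1) := by
        refine ⟨hxT, ?_⟩
        rw [Metric.mem_closedBall, dist_zero_right, norm_smul_real _ hcpos.le]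
        nlinarith [norm_nonneg l]
      have hyK : (((1 + t₀)⁻¹ : ℝ) : ℂ) • l ∈ Tube n k ∩ Metric.closedBall 0 (2 * max R 1) := by
        refine ⟨hyT, ?_⟩
        rw [Metric.mem_closedBall, dist_zero_right, norm_smul_real _ hc₀pos.le]
        nlinarith [norm_nonneg l]
      have hdist : dist ((((1 + t)⁻¹ : ℝ) : ℂ) • l) ((((1 + t₀)⁻¹ : ℝ) : ℂ) • l) < δ₁ := by
        rw [dist_eq_norm]
        have heq : (((1 + t)⁻¹ : ℝ) : ℂ) • l - (((1 + t₀)⁻¹ : ℝ) : ℂ) • l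
            = ((((1 + t)⁻¹ - (1 + t₀)⁻¹ : ℝ)) : ℂ) • l := by
          push_cast
          rw [sub_smul]
        rw [heq, norm_smul, Complex.norm_real, Real.norm_eq_abs]
        have hd := inv_diff_le t t₀ ht0 ht₀0
        have h2 : |(1 + t)⁻¹ - (1 + t₀)⁻¹| * ‖l‖ ≤ |t - t₀| * (2 * max R 1) :=
          mul_le_mul hd hcase (norm_nonneg l) (abs_nonneg _)
        rw [lt_div_iff₀ (by positivity)] at hlt
        linarith
      have hfd := hδQ _ hxK _ hyK hdist
      rw [hx, hy, ← dist_eq_norm]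
      exact hfd.le
    · -- far: vanishing at infinity
      push_neg at hcase
      rw [hx, hy]
      have hb1 : ‖f ((((1 + t)⁻¹ : ℝ) : ℂ) • l)‖ ≤ ε / 2 := by
        apply hR _ hxT
        rw [norm_smul_real _ hcpos.le]
        have hRm : R ≤ max R 1 := le_max_left _ _
        have key : (1 / 2 : ℝ) * (2 * max R 1) ≤ (1 + t)⁻¹ * ‖l‖ :=
          mul_le_mul hchalf hcase.le (by positivity) hcpos.le
        linarith
      have hb2 : ‖f ((((1 + t₀)⁻¹ : ℝ) : ℂ) • l)‖ ≤ ε / 2 := by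
        apply hR _ hyT
        rw [norm_smul_real _ hc₀pos.le]
        have hRm : R ≤ max R 1 := le_max_left _ _
        have key : (1 / 2 : ℝ) * (2 * max R 1) ≤ (1 + t₀)⁻¹ * ‖l‖ :=
          mul_le_mul hc₀half hcase.le (by positivity) hc₀pos.le
        linarith
      calc ‖f ((((1 + t)⁻¹ : ℝ) : ℂ) • l) - f ((((1 + t₀)⁻¹ : ℝ) : ℂ) • l)‖
          ≤ ‖f ((((1 + t)⁻¹ : ℝ) : ℂ) • l)‖ + ‖f ((((1 + t₀)⁻¹ : ℝ) : ℂ) • l)‖ :=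
            norm_sub_le _ _
      _ ≤ ε := by linarith
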